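/- arXiv:2102.09827 — 4 statements merged into one kernel-verified Lean document; each statement's English description precedes it below -/
import Mathlib

section
/- For any real numbers a₁,…,a_k, b with b·∏ᵢaᵢ ≠ 0, any real numbers α₁,β₁,…,α_k,β_k,α_{k+1},…,α_n, δ with not all αᵢ, βᵢ zero, there exist real numbers s and t₁,…,t_{n-1} such that ∑_{i=1}^k tᵢ(αᵢ cos(aᵢ s) + βᵢ sin(aᵢ s)) + ∑_{j=k+1}^{n-1} αⱼ tⱼ + α_n b s = δ. Consequently, the generalized helicoid M^n(a₁,…,a_k,b) intersects every affine hyperplane of ℝ^{n+k}. -/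
open Real

/-- Lemma 2 of the paper: if `b * ∏ aᵢ ≠ 0`, then for any hyperplane coefficients
`α, β, γ, αn` (not all zero) and any `δ`, there is a point of the generalized
helicoid on the hyperplane, i.e. the helicoid equation
`∑ tᵢ(αᵢ cos(aᵢ s) + βᵢ sin(aᵢ s)) + ∑ γⱼ uⱼ + αn · b s = δ` is solvable. -/
theorem helicoid_meets_every_hyperplane (k m : ℕ) (a : Fin k → ℝ) (b : ℝ)
    (hb : b * ∏ i, a i ≠ 0)
    (α β : Fin k → ℝ) (γ : Fin m → ℝ) (αn : ℝ) (δ : ℝ)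
    (hcoef : ¬(α = 0 ∧ β = 0 ∧ γ = 0 ∧ αn = 0)) :
    ∃ (s : ℝ) (t : Fin k → ℝ) (u : Fin m → ℝ),
      (∑ i, t i * (α i * Real.cos (a i * s) + β i * Real.sin (a i * s))) +
        (∑ j, γ j * u j) + αn * (b * s) = δ := by
  have hbne : b ≠ 0 := left_ne_zero_of_mul hb
  have hane : ∀ i, a i ≠ 0 := by
    have := right_ne_zero_of_mul hb
    rw [Finset.prod_ne_zero_iff] at this
    exact fun i => this i (Finset.mem_univ i)
  by_cases hαn : αn ≠ 0
  · refine ⟨δ / (αn * b), 0, 0, ?_⟩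
    simp [mul_comm αn b, mul_div_cancel₀ _ (mul_ne_zero hbne hαn)]
    field_simp
  push_neg at hαn
  by_cases hα : α ≠ 0
  · obtain ⟨i, hi⟩ := Function.ne_iff.mp hα
    refine ⟨0, fun j => if j = i then δ / α i else 0, 0, ?_⟩
    simp [hαn, ite_mul, Finset.sum_ite_eq', div_mul_cancel₀ _ hi]
  push_neg at hα
  by_cases hβ : β ≠ 0
  · obtain ⟨i, hi⟩ := Function.ne_iff.mp hβ
    refine ⟨π / (2 * a i), fun j => if j = i then δ / β i else 0, 0, ?_⟩
    have : a i * (π / (2 * a i)) = π / 2 := by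
      field_simp
      ring_nf
      exact mul_inv_cancel₀ (hane i)
    simp [hαn, hα, ite_mul, Finset.sum_ite_eq', this, div_mul_cancel₀ _ hi]
  push_neg at hβ
  have hγ : γ ≠ 0 := by
    intro h; exact hcoef ⟨hα, hβ, h, hαn⟩
  obtain ⟨j, hj⟩ := Function.ne_iff.mp hγ
  refine ⟨0, 0, fun l => if l = j then δ / γ j else 0, ?_⟩
  simp [hαn, hα, mul_ite, Finset.sum_ite_eq', mul_div_cancel₀ _ hj]
end

section
/- Let a, b be real numbers with a·b ≠ 0. Then the helicoid in ℝ³ parametrized by (s,t) ↦ (t cos(as), t sin(as), bs) intersects every affine plane of ℝ³. -/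
open Real

/-- The helicoid `(s,t) ↦ (t cos(as), t sin(as), bs)` with `a·b ≠ 0` intersects
every affine plane `{(x,y,z) : αx + βy + γz = δ}` of `ℝ³`. -/
theorem helicoid_meets_every_plane (a b : ℝ) (hab : a * b ≠ 0)
    (α β γ δ : ℝ) (hcoef : (α, β, γ) ≠ (0, 0, 0)) :
    ∃ s t : ℝ, α * (t * Real.cos (a * s)) + β * (t * Real.sin (a * s)) + γ * (b * s) = δ := by
  have ha : a ≠ 0 := fun h => hab (by simp [h])
  have hb : b ≠ 0 := fun h => hab (by simp [h])
  by_cases hgamma : γ = 0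
  · by_cases halpha : α = 0
    · have hbeta : β ≠ 0 := by
        intro h; exact hcoef (by simp [halpha, h, hgamma, Prod.ext_iff])
      refine ⟨π / (2 * a), δ / β, ?_⟩
      have : a * (π / (2 * a)) = π / 2 := by field_simp
      rw [this]
      simp [halpha, hgamma]
      field_simp
    · refine ⟨0, δ / α, ?_⟩
      simp [hgamma]
      field_simp
  · refine ⟨δ / (γ * b), 0, ?_⟩
    field_simp
    ring
end

section
/- A generalized helicoid M^n(a₁,…,a_k,b) ⊂ ℝ^{n+k} that is contained in an open half-space of ℝ^{n+k} must satisfy b·∏_{i=1}^k aᵢ = 0. -/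
open Real

/-- The generalized helicoid `M^n(a₁,…,a_k,b) ⊂ ℝ^{n+k}`: the image of
`(s,t₁,…,t_{n-1}) ↦ (t₁cos(a₁s), t₁sin(a₁s), …, t_k cos(a_k s), t_k sin(a_k s),
t_{k+1},…,t_{n-1}, bs)`, with the ambient Euclidean space `ℝ^{n+k}` coordinatized by
the index type `(Fin k ⊕ Fin k) ⊕ (Fin (n-1-k) ⊕ Unit)`. -/
def generalizedHelicoid (n k : ℕ) (a : Fin k → ℝ) (b : ℝ) :
    Set (EuclideanSpace ℝ ((Fin k ⊕ Fin k) ⊕ (Fin (n - 1 - k) ⊕ Unit))) :=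
  {x | ∃ (s : ℝ) (t : Fin k → ℝ) (u : Fin (n - 1 - k) → ℝ),
    (∀ i, x (Sum.inl (Sum.inl i)) = t i * Real.cos (a i * s)) ∧
    (∀ i, x (Sum.inl (Sum.inr i)) = t i * Real.sin (a i * s)) ∧
    (∀ j, x (Sum.inr (Sum.inl j)) = u j) ∧
    x (Sum.inr (Sum.inr ())) = b * s}

noncomputable def hpt (n k : ℕ) (a : Fin k → ℝ) (b : ℝ) (s : ℝ) (t : Fin k → ℝ)
    (u : Fin (n - 1 - k) → ℝ) :
    EuclideanSpace ℝ ((Fin k ⊕ Fin k) ⊕ (Fin (n - 1 - k) ⊕ Unit)) :=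
  WithLp.toLp 2 fun (idx : (Fin k ⊕ Fin k) ⊕ (Fin (n - 1 - k) ⊕ Unit)) => match idx with
  | .inl (.inl i) => t i * Real.cos (a i * s)
  | .inl (.inr i) => t i * Real.sin (a i * s)
  | .inr (.inl j) => u j
  | .inr (.inr _) => b * s

lemma hpt_mem (n k : ℕ) (a : Fin k → ℝ) (b : ℝ) (s : ℝ) (t : Fin k → ℝ)
    (u : Fin (n - 1 - k) → ℝ) :
    hpt n k a b s t u ∈ generalizedHelicoid n k a b :=
  ⟨s, t, u, fun _ => rfl, fun _ => rfl, fun _ => rfl, rfl⟩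

lemma inner_hpt (n k : ℕ) (a : Fin k → ℝ) (b : ℝ) (s : ℝ) (t : Fin k → ℝ)
    (u : Fin (n - 1 - k) → ℝ)
    (v : EuclideanSpace ℝ ((Fin k ⊕ Fin k) ⊕ (Fin (n - 1 - k) ⊕ Unit))) :
    (inner ℝ (hpt n k a b s t u) v : ℝ) =
      (∑ i, t i * Real.cos (a i * s) * v (.inl (.inl i)))
      + (∑ i, t i * Real.sin (a i * s) * v (.inl (.inr i)))
      + ((∑ j, u j * v (.inr (.inl j)))
      + b * s * v (.inr (.inr ()))) := by
  simp [PiLp.inner_apply, Fintype.sum_sum_type, hpt, RCLike.inner_apply, mul_comm]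

/-- A generalized helicoid contained in an open half-space `{x : ⟨x, v⟩ > c}`
(`v ≠ 0`) must satisfy `b · ∏ᵢ aᵢ = 0`. -/
theorem helicoid_in_halfspace (n k : ℕ) (hk : k ≤ n) (a : Fin k → ℝ) (b : ℝ)
    (v : EuclideanSpace ℝ ((Fin k ⊕ Fin k) ⊕ (Fin (n - 1 - k) ⊕ Unit))) (hv : v ≠ 0)
    (c : ℝ) (hsub : generalizedHelicoid n k a b ⊆ {x | (inner ℝ x v : ℝ) > c}) :
    b * ∏ i, a i = 0 := by
  by_contra h
  have hb : b ≠ 0 := fun hb => h (by simp [hb])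
  have ha : ∀ i, a i ≠ 0 := by
    intro i hai
    exact h (by simp [Finset.prod_eq_zero (Finset.mem_univ i) hai])
  obtain ⟨idx, hidx⟩ : ∃ idx, v idx ≠ 0 := by
    by_contra hall
    push_neg at hall
    exact hv (PiLp.ext hall)
  -- in each case we produce a point of the helicoid with inner product c - 1
  have key : ∃ x ∈ generalizedHelicoid n k a b, (inner ℝ x v : ℝ) = c - 1 := by
    obtain (⟨i⟩ | ⟨i⟩) | (⟨j⟩ | ⟨⟩) := idx
    · -- cos coordinate: s = 0
      refine ⟨hpt n k a b 0 (Pi.single i ((c - 1) / v (.inl (.inl i)))) 0,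
        hpt_mem .., ?_⟩
      rw [inner_hpt]
      simp [Pi.single_apply, Finset.sum_ite_eq', div_mul_cancel₀ _ hidx]
    · -- sin coordinate: s = π/(2 aᵢ)
      set s : ℝ := Real.pi / (2 * a i) with hs
      have has : a i * s = Real.pi / 2 := by
        field_simp [hs, ha i]
        rw [hs]; field_simp; exact div_self (ha i)
      refine ⟨hpt n k a b s
        (Pi.single i ((c - 1 - b * s * v (.inr (.inr ()))) / v (.inl (.inr i)))) 0,
        hpt_mem .., ?_⟩
      rw [inner_hpt]
      simp [Pi.single_apply, Finset.sum_ite_eq', has,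
        div_mul_cancel₀ _ hidx]
    · -- the `u` coordinates: s = 0
      refine ⟨hpt n k a b 0 0 (Pi.single j ((c - 1) / v (.inr (.inl j)))),
        hpt_mem .., ?_⟩
      rw [inner_hpt]
      simp [Pi.single_apply, Finset.sum_ite_eq', div_mul_cancel₀ _ hidx]
    · -- the last coordinate
      refine ⟨hpt n k a b ((c - 1) / (b * v (.inr (.inr ())))) 0 0, hpt_mem .., ?_⟩
      rw [inner_hpt]
      have : b * ((c - 1) / (b * v (.inr (.inr ())))) * v (.inr (.inr ())) = c - 1 := by
        field_simp
      simp [this]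
  obtain ⟨x, hx, hinner⟩ := key
  have := hsub hx
  simp only [Set.mem_setOf_eq, hinner] at this
  linarith
end

section
/- Let E ⊂ ℝ^{2L-1} be a subset contained in the open set {(p, ω) : pₗ > 0 for all l} (positivity of prices, where p ranges over the first L−1 coordinates together with p_L = 1 implicit). If E is, up to a rigid motion of ℝ^{2L-1}, a generalized helicoid M^n(a₁,…,a_k,b), then b·∏ᵢaᵢ = 0. -/
open Real

/-- Explicit point of the generalized helicoid. -/
noncomputable def heliPt (n k : ℕ) (a : Fin k → ℝ) (b : ℝ) (s : ℝ) (t : Fin k → ℝ)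
    (u : Fin (n - 1 - k) → ℝ) :
    EuclideanSpace ℝ ((Fin k ⊕ Fin k) ⊕ (Fin (n - 1 - k) ⊕ Unit)) :=
  (WithLp.equiv 2 _).symm
    (Sum.elim (Sum.elim (fun i => t i * Real.cos (a i * s)) (fun i => t i * Real.sin (a i * s)))
      (Sum.elim u (fun _ => b * s)))

lemma heliPt_mem (n k : ℕ) (a : Fin k → ℝ) (b : ℝ) (s : ℝ) (t : Fin k → ℝ)
    (u : Fin (n - 1 - k) → ℝ) : heliPt n k a b s t u ∈ generalizedHelicoid n k a b :=
  ⟨s, t, u, fun _ => rfl, fun _ => rfl, fun _ => rfl, rfl⟩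

@[simp] lemma heliPt_apply (n k : ℕ) (a : Fin k → ℝ) (b : ℝ) (s : ℝ) (t : Fin k → ℝ)
    (u : Fin (n - 1 - k) → ℝ) (w) :
    heliPt n k a b s t u w =
      Sum.elim (Sum.elim (fun i => t i * Real.cos (a i * s))
        (fun i => t i * Real.sin (a i * s))) (Sum.elim u (fun _ => b * s)) w := rfl

lemma lin_aux (c d : ℝ) (h : ∀ X : ℝ, 0 < X * c + d) : c = 0 := by
  by_contra hc
  have := h ((-d - 1) / c)
  rw [div_mul_cancel₀ _ hc] at this
  linarith

lemma sum_single_mul {ι : Type*} [Fintype ι] [DecidableEq ι] (j : ι) (X : ℝ) (g : ι → ℝ) :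
    ∑ j', (Pi.single j X : ι → ℝ) j' * g j' = X * g j := by
  rw [Finset.sum_eq_single j]
  · rw [Pi.single_eq_same]
  · intro i _ hi; rw [Pi.single_eq_of_ne hi, zero_mul]
  · intro h; exact absurd (Finset.mem_univ j) h

/-- If `E ⊂ ℝ^{2L-1}` lies in the region where the first `L-1` coordinates
(prices) are positive, and `E` is, up to a rigid motion `x ↦ A x + v`, a
generalized helicoid `M^n(a₁,…,a_k,b)`, then `b · ∏ᵢ aᵢ = 0`. -/
theorem price_positivity_forces_degenerate_helicoid (L n k : ℕ) (hL : 2 ≤ L)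
    (hk : k ≤ n) (hdim : n + k = 2 * L - 1) (a : Fin k → ℝ) (b : ℝ)
    (E : Set (EuclideanSpace ℝ (Fin (2 * L - 1))))
    (hpos : ∀ x ∈ E, ∀ l : Fin (2 * L - 1), (l : ℕ) < L - 1 → 0 < x l)
    (A : EuclideanSpace ℝ ((Fin k ⊕ Fin k) ⊕ (Fin (n - 1 - k) ⊕ Unit)) ≃ₗᵢ[ℝ]
      EuclideanSpace ℝ (Fin (2 * L - 1)))
    (v : EuclideanSpace ℝ (Fin (2 * L - 1)))
    (hE : E = (fun x => A x + v) '' generalizedHelicoid n k a b) :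
    b * ∏ i, a i = 0 := by
  by_contra hcon
  have hb : b ≠ 0 := fun h => hcon (by simp [h])
  have ha : ∀ i, a i ≠ 0 := by
    intro i h
    exact hcon (by rw [Finset.prod_eq_zero (Finset.mem_univ i) h, mul_zero])
  have hL1 : 0 < 2 * L - 1 := by omega
  set l₀ : Fin (2 * L - 1) := ⟨0, hL1⟩ with hl₀
  -- the linear functional `y ↦ (A y) l₀`
  let Φ : EuclideanSpace ℝ ((Fin k ⊕ Fin k) ⊕ (Fin (n - 1 - k) ⊕ Unit)) →ₗ[ℝ] ℝ :=
    { toFun := fun y => A y l₀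
      map_add' := fun x y => by simp [map_add]
      map_smul' := fun c x => by simp [map_smul] }
  set c : (Fin k ⊕ Fin k) ⊕ (Fin (n - 1 - k) ⊕ Unit) → ℝ := fun w => Φ (EuclideanSpace.single w 1) with hc
  have key : ∀ y : EuclideanSpace ℝ ((Fin k ⊕ Fin k) ⊕ (Fin (n - 1 - k) ⊕ Unit)), Φ y = ∑ w, y w * c w := by
    intro y
    conv_lhs => rw [← (EuclideanSpace.basisFun _ ℝ).sum_repr y]
    rw [map_sum]
    simp [hc, smul_eq_mul]
  -- positivity of `Φ` + `v l₀` on helicoid points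
  have d := v l₀
  have hP : ∀ (s : ℝ) (t : Fin k → ℝ) (u : Fin (n - 1 - k) → ℝ),
      0 < Φ (heliPt n k a b s t u) + v l₀ := by
    intro s t u
    have hmem : (fun x => A x + v) (heliPt n k a b s t u) ∈ E := by
      rw [hE]; exact Set.mem_image_of_mem _ (heliPt_mem n k a b s t u)
    have := hpos _ hmem l₀ (by simp [hl₀]; omega)
    show 0 < A (heliPt n k a b s t u) l₀ + v l₀
    simpa [PiLp.add_apply] using this
  -- expand the functional on helicoid points
  have hP' : ∀ (s : ℝ) (t : Fin k → ℝ) (u : Fin (n - 1 - k) → ℝ),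
      0 < (∑ i, t i * Real.cos (a i * s) * c (Sum.inl (Sum.inl i)))
        + (∑ i, t i * Real.sin (a i * s) * c (Sum.inl (Sum.inr i)))
        + (∑ j, u j * c (Sum.inr (Sum.inl j)))
        + (b * s) * c (Sum.inr (Sum.inr ())) + v l₀ := by
    intro s t u
    have := hP s t u
    rw [key] at this
    simpa [Fintype.sum_sum_type, add_assoc] using this
  -- Step A : the `b s` coordinate
  have hcE : c (Sum.inr (Sum.inr ())) = 0 := by
    have : ∀ X : ℝ, 0 < X * c (Sum.inr (Sum.inr ())) + v l₀ := by
      intro X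
      have := hP' (X / b) 0 0
      rw [mul_div_cancel₀ _ hb] at this
      simpa using this
    exact lin_aux _ _ this
  -- Step B : the `u` coordinates
  have hcu : ∀ j, c (Sum.inr (Sum.inl j)) = 0 := by
    intro j
    refine lin_aux _ (v l₀) fun X => ?_
    have := hP' 0 0 (Pi.single j X)
    simp only [mul_zero, Real.cos_zero, Real.sin_zero, mul_one, zero_mul, Pi.zero_apply,
      Finset.sum_const_zero, zero_add, add_zero, hcE] at this
    rwa [sum_single_mul] at this
  -- Step C : the cosine coordinates
  have hct : ∀ i, c (Sum.inl (Sum.inl i)) = 0 := by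
    intro i
    refine lin_aux _ (v l₀) fun X => ?_
    have := hP' 0 (Pi.single i X) 0
    simp only [mul_zero, Real.cos_zero, Real.sin_zero, mul_one, zero_mul, Pi.zero_apply,
      Finset.sum_const_zero, zero_add, add_zero, hcE] at this
    rwa [sum_single_mul] at this
  -- Step D : the sine coordinates
  have hcs : ∀ i, c (Sum.inl (Sum.inr i)) = 0 := by
    intro i
    refine lin_aux _ (v l₀) fun X => ?_
    have := hP' (π / (2 * a i)) (Pi.single i X) 0
    have h2ai : (2 : ℝ) * a i ≠ 0 := mul_ne_zero two_ne_zero (ha i)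
    have hai : a i * (π / (2 * a i)) = π / 2 := by
      rw [mul_div_assoc', div_eq_div_iff h2ai two_ne_zero]; ring
    simp only [hcE, mul_zero, zero_mul, Pi.zero_apply, Finset.sum_const_zero,
      zero_add, add_zero] at this
    have h1 : ∀ i', (Pi.single i X : Fin k → ℝ) i' * Real.cos (a i' * (π / (2 * a i))) *
        c (Sum.inl (Sum.inl i')) = 0 := by
      intro i'
      rcases eq_or_ne i' i with rfl | hne
      · rw [hai, Real.cos_pi_div_two]; ring
      · rw [Pi.single_eq_of_ne hne]; ring
    rw [Finset.sum_congr rfl (fun i' _ => h1 i')] at this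
    have h2 : ∀ i', (Pi.single i X : Fin k → ℝ) i' * Real.sin (a i' * (π / (2 * a i))) *
        c (Sum.inl (Sum.inr i')) =
        (if i' = i then X * c (Sum.inl (Sum.inr i)) else 0) := by
      intro i'
      rcases eq_or_ne i' i with rfl | hne
      · rw [hai, Real.sin_pi_div_two, Pi.single_eq_same, if_pos rfl]; ring
      · rw [Pi.single_eq_of_ne hne, if_neg hne]; ring
    rw [Finset.sum_congr rfl (fun i' _ => h2 i'), Finset.sum_ite_eq'] at this
    simpa using this
  -- all coefficients vanish, so `Φ = 0`, contradiction
  have hΦ0 : ∀ y, Φ y = 0 := by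
    intro y
    rw [key]
    refine Finset.sum_eq_zero fun w _ => ?_
    rcases w with (wi | wi) | (wj | wu)
    · rw [hct wi]; ring
    · rw [hcs wi]; ring
    · rw [hcu wj]; ring
    · rw [hcE]; ring
  have h1 : Φ (A.symm (EuclideanSpace.single l₀ 1)) = 1 := by
    show A (A.symm (EuclideanSpace.single l₀ 1)) l₀ = 1
    rw [A.apply_symm_apply]
    simp
  rw [hΦ0] at h1
  exact zero_ne_one h1
end
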